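/- Let O ⊂ ℝ^q be an open convex set and let F = (F₁, F₂) : O → ℝ^m × ℝ^s be Lipschitz (with respect to Euclidean distances) such that at almost every point x ∈ O where F is differentiable the contact equations DF₂(x)v = ½ B(F₁(x), DF₁(x)v) hold for all v ∈ ℝ^q. Then there exists a constant C > 0, depending only on B, such that d_B(F(x), F(x')) ≤ C · Lip(F₁) · |x − x'| for all x, x' ∈ O, where Lip(F₁) is the Lipschitz constant of F₁. -/

import Mathlib

open MeasureTheory Topology ENNReal

/-- `ℝ^n` with the Euclidean norm. -/
abbrev Euc (n : ℕ) : Type := EuclideanSpace ℝ (Fin n)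

/-- The gauge distance of the two-step Carnot group `G_B = ℝ^m × ℝ^s` in exponential
coordinates: `d_B(p,q) = N(p⁻¹·q)` with `N(x,y) = |x| + |y|^{1/2}`. -/
noncomputable def gaugeDist {m s : ℕ}
    (B : Euc m →L[ℝ] Euc m →L[ℝ] Euc s) (p q : Euc m × Euc s) : ℝ :=
  ‖q.1 - p.1‖ + Real.sqrt ‖q.2 - p.2 - (1 / 2 : ℝ) • B p.1 q.1‖

open Filter Set

set_option maxHeartbeats 1000000

lemma ftc_ae_bound {E : Type*} [NormedAddCommGroup E] [NormedSpace ℝ E] [CompleteSpace E]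
    {h : ℝ → E} {L : NNReal} (hL : LipschitzWith L h) {M : ℝ}
    (hd : ∀ᵐ t ∂(volume : Measure ℝ), t ∈ Set.Ioo (0:ℝ) 1 →
      ∃ d, HasDerivAt h d t ∧ ‖d‖ ≤ M) :
    ‖h 1 - h 0‖ ≤ M := by
  have hcont : Continuous h := hL.continuous
  set ε : ℕ → ℝ := fun n => 1 / (n + 1) with hεdef
  have hεpos : ∀ n, 0 < ε n := fun n => by positivity
  have hεlim : Tendsto ε atTop (𝓝 0) := tendsto_one_div_add_atTop_nhds_zero_nat
  set φ : ℕ → ℝ → E := fun n t => (ε n)⁻¹ • (h (t + ε n) - h t) with hφdef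
  set μ : Measure ℝ := volume.restrict (Set.Ioo (0:ℝ) 1) with hμdef
  haveI : IsFiniteMeasure μ := ⟨by simp [hμdef, Real.volume_Ioo]⟩
  -- uniform bound
  have hbound : ∀ n t, ‖φ n t‖ ≤ (L : ℝ) := by
    intro n t
    have h1 : ‖h (t + ε n) - h t‖ ≤ (L : ℝ) * ε n := by
      have := hL.dist_le_mul (t + ε n) t
      simpa [dist_eq_norm, abs_of_pos (hεpos n)] using this
    have h2 : ‖φ n t‖ = (ε n)⁻¹ * ‖h (t + ε n) - h t‖ := by
      rw [hφdef]
      simp only [norm_smul, Real.norm_eq_abs]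
      rw [abs_of_pos (inv_pos.2 (hεpos n))]
    rw [h2]
    calc (ε n)⁻¹ * ‖h (t + ε n) - h t‖ ≤ (ε n)⁻¹ * ((L : ℝ) * ε n) :=
          mul_le_mul_of_nonneg_left h1 (inv_pos.2 (hεpos n)).le
      _ = (L : ℝ) := by rw [mul_comm, mul_assoc, mul_inv_cancel₀ (hεpos n).ne', mul_one]
  -- limit function
  classical
  set g : ℝ → E := fun t =>
    if ht : ∃ d, HasDerivAt h d t ∧ ‖d‖ ≤ M then ht.choose else 0 with hgdef
  have hg : ∀ᵐ t ∂μ, Tendsto (fun n => φ n t) atTop (𝓝 (g t)) ∧ ‖g t‖ ≤ M := by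
    have hd' : ∀ᵐ t ∂μ, t ∈ Set.Ioo (0:ℝ) 1 → ∃ d, HasDerivAt h d t ∧ ‖d‖ ≤ M :=
      ae_restrict_of_ae hd
    filter_upwards [hd', ae_restrict_mem measurableSet_Ioo] with t ht htm
    obtain ⟨d, hdd, hdM⟩ := ht htm
    have hex : ∃ d, HasDerivAt h d t ∧ ‖d‖ ≤ M := ⟨d, hdd, hdM⟩
    have hspec := hex.choose_spec
    have hgt : g t = hex.choose := by rw [hgdef]; simp [hex]
    constructor
    · rw [hgt]
      have hslope := hasDerivAt_iff_tendsto_slope.1 hspec.1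
      have hseq : Tendsto (fun n => t + ε n) atTop (𝓝[≠] t) := by
        apply tendsto_nhdsWithin_of_tendsto_nhds_of_eventually_within
        · simpa using (tendsto_const_nhds.add hεlim)
        · exact Eventually.of_forall fun n => by
            simp [Set.mem_compl_iff, (hεpos n).ne']
      have := hslope.comp hseq
      convert this using 2 with n
      simp [hφdef, slope_def_module]
    · rw [hgt]; exact hspec.2
  -- dominated convergence
  have hmeasφ : ∀ n, AEStronglyMeasurable (φ n) μ := fun n => by
    exact (((hcont.comp (continuous_id.add continuous_const)).sub hcont).const_smul _).aestronglyMeasurable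
  have hDC : Tendsto (fun n => ∫ t, φ n t ∂μ) atTop (𝓝 (∫ t, g t ∂μ)) := by
    refine tendsto_integral_of_dominated_convergence (fun _ => (L : ℝ)) hmeasφ
      (integrable_const _) (fun n => Eventually.of_forall fun t => hbound n t) ?_
    filter_upwards [hg] with t ht using ht.1
  -- identify the integrals of φ n
  have hInt : ∀ a b : ℝ, IntervalIntegrable h volume a b := fun a b =>
    hcont.intervalIntegrable a b
  have hφint : ∀ n, ∫ t, φ n t ∂μ =
      (ε n)⁻¹ • ((∫ t in (1:ℝ)..(1 + ε n), h t) - ∫ t in (0:ℝ)..(ε n), h t) := by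
    intro n
    have e1 : ∫ t, φ n t ∂μ = ∫ t in (0:ℝ)..1, φ n t := by
      rw [hμdef, intervalIntegral.integral_of_le zero_le_one,
        ← MeasureTheory.integral_Ioc_eq_integral_Ioo]
    rw [e1]
    have e2 : ∫ t in (0:ℝ)..1, φ n t
        = (ε n)⁻¹ • ((∫ t in (0:ℝ)..1, h (t + ε n)) - ∫ t in (0:ℝ)..1, h t) := by
      have hi : IntervalIntegrable (fun t => h (t + ε n)) volume 0 1 :=
        Continuous.intervalIntegrable (by fun_prop) 0 1
      rw [← intervalIntegral.integral_sub hi (hInt 0 1), ← intervalIntegral.integral_smul]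
    rw [e2, intervalIntegral.integral_comp_add_right h (ε n)]
    congr 1
    have a1 : (∫ t in (0 + ε n)..(1:ℝ), h t) + (∫ t in (1:ℝ)..(1 + ε n), h t)
        = ∫ t in (0 + ε n)..(1 + ε n), h t :=
      intervalIntegral.integral_add_adjacent_intervals (hInt _ _) (hInt _ _)
    have a2 : (∫ t in (0:ℝ)..(ε n), h t) + (∫ t in (ε n)..(1:ℝ), h t)
        = ∫ t in (0:ℝ)..(1:ℝ), h t :=
      intervalIntegral.integral_add_adjacent_intervals (hInt _ _) (hInt _ _)
    rw [← a1, ← a2]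
    simp only [zero_add]
    abel
  -- the two endpoint limits
  have hlim1 : Tendsto (fun n => (ε n)⁻¹ • ∫ t in (1:ℝ)..(1 + ε n), h t) atTop (𝓝 (h 1)) := by
    have hH : HasDerivAt (fun u => ∫ t in (1:ℝ)..u, h t) (h 1) 1 :=
      intervalIntegral.integral_hasDerivAt_right (hInt 1 1)
        (hcont.stronglyMeasurableAtFilter _ _) hcont.continuousAt
    have hslope := hasDerivAt_iff_tendsto_slope.1 hH
    have hseq : Tendsto (fun n => 1 + ε n) atTop (𝓝[≠] (1:ℝ)) := by
      apply tendsto_nhdsWithin_of_tendsto_nhds_of_eventually_within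
      · simpa using (tendsto_const_nhds.add hεlim)
      · exact Eventually.of_forall fun n => by simp [Set.mem_compl_iff, (hεpos n).ne']
    have := hslope.comp hseq
    convert this using 2 with n
    simp [slope_def_module, intervalIntegral.integral_same]
  have hlim0 : Tendsto (fun n => (ε n)⁻¹ • ∫ t in (0:ℝ)..(ε n), h t) atTop (𝓝 (h 0)) := by
    have hH : HasDerivAt (fun u => ∫ t in (0:ℝ)..u, h t) (h 0) 0 :=
      intervalIntegral.integral_hasDerivAt_right (hInt 0 0)
        (hcont.stronglyMeasurableAtFilter _ _) hcont.continuousAt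
    have hslope := hasDerivAt_iff_tendsto_slope.1 hH
    have hseq : Tendsto (fun n => ε n) atTop (𝓝[≠] (0:ℝ)) := by
      apply tendsto_nhdsWithin_of_tendsto_nhds_of_eventually_within
      · simpa using hεlim
      · exact Eventually.of_forall fun n => by simp [Set.mem_compl_iff, (hεpos n).ne']
    have := hslope.comp hseq
    convert this using 2 with n
    simp [slope_def_module, intervalIntegral.integral_same]
  have hlim : Tendsto (fun n => ∫ t, φ n t ∂μ) atTop (𝓝 (h 1 - h 0)) := by
    have : Tendsto (fun n => ((ε n)⁻¹ • ∫ t in (1:ℝ)..(1 + ε n), h t)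
        - (ε n)⁻¹ • ∫ t in (0:ℝ)..(ε n), h t) atTop (𝓝 (h 1 - h 0)) := hlim1.sub hlim0
    refine this.congr fun n => ?_
    rw [hφint n, smul_sub]
  -- conclude
  have heq : h 1 - h 0 = ∫ t, g t ∂μ := tendsto_nhds_unique hlim hDC
  rw [heq]
  have : ‖∫ t, g t ∂μ‖ ≤ M * (μ Set.univ).toReal := by
    apply norm_integral_le_of_norm_le_const
    filter_upwards [hg] with t ht using ht.2
  simpa [hμdef, Real.volume_Ioo] using this

set_option maxHeartbeats 1000000 in
lemma seg_bound {q m s : ℕ}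
    (B : Euc m →L[ℝ] Euc m →L[ℝ] Euc s) (hB : ∀ u v, B u v = - B v u)
    {O : Set (Euc q)} (hO : IsOpen O) (hconv : Convex ℝ O)
    {F : Euc q → Euc m × Euc s} {K K₁ : NNReal}
    (hF : LipschitzOnWith K F O) (hF1 : LipschitzOnWith K₁ (fun z => (F z).1) O)
    {x y : Euc q} (hx : x ∈ O) (hy : y ∈ O)
    (hseg : ∀ᵐ t ∂(volume : Measure ℝ), t ∈ Set.Ioo (0:ℝ) 1 →
      (DifferentiableAt ℝ F (x + t • (y - x)) ∧
        ∀ v, (fderiv ℝ F (x + t • (y - x)) v).2 =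
          (1/2 : ℝ) • B (F (x + t • (y - x))).1 ((fderiv ℝ F (x + t • (y - x)) v).1))) :
    ‖(F y).2 - (F x).2 - (1/2 : ℝ) • B (F x).1 ((F y).1)‖ ≤ ‖B‖ * K₁^2 * ‖y - x‖^2 := by
  set v : Euc q := y - x with hvdef
  set A : (Euc m × Euc s) →L[ℝ] Euc s :=
    ContinuousLinearMap.snd ℝ (Euc m) (Euc s) -
      (1/2 : ℝ) • (B (F x).1).comp (ContinuousLinearMap.fst ℝ (Euc m) (Euc s)) with hAdef
  have hA_apply : ∀ p : Euc m × Euc s, A p = p.2 - (1/2 : ℝ) • B (F x).1 p.1 := by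
    intro p; simp [hAdef]
  set proj : ℝ → ℝ := fun t => (max t 0) ⊓ 1 with hprojdef
  have hproj_mem : ∀ t, proj t ∈ Set.Icc (0:ℝ) 1 := by
    intro t
    constructor
    · exact le_min (le_max_right t 0) zero_le_one
    · exact min_le_right _ _
  have hproj_lip : LipschitzWith 1 proj := (LipschitzWith.id.max_const 0).min_const 1
  have hproj_eq : ∀ t ∈ Set.Ioo (0:ℝ) 1, proj t = t := by
    intro t ht
    rw [hprojdef]
    simp only [max_eq_left ht.1.le, min_eq_left ht.2.le]
  set γ : ℝ → Euc q := fun t => x + proj t • v with hγdef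
  have hγO : ∀ t, γ t ∈ O := fun t => hconv.add_smul_sub_mem hx hy (hproj_mem t)
  have hγ_lip : LipschitzWith (‖v‖₊) γ := by
    apply LipschitzWith.of_dist_le_mul
    intro a b
    have : γ a - γ b = (proj a - proj b) • v := by
      simp only [hγdef, sub_smul]
      abel
    rw [dist_eq_norm, this, norm_smul, Real.norm_eq_abs]
    have h3 : |proj a - proj b| ≤ dist a b := by
      have := hproj_lip.dist_le_mul a b
      simpa [dist_eq_norm, Real.norm_eq_abs] using this
    calc |proj a - proj b| * ‖v‖ ≤ dist a b * ‖v‖ := by gcongr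
      _ = ↑‖v‖₊ * dist a b := by rw [coe_nnnorm]; ring
  set h : ℝ → Euc s := fun t => A (F (γ t)) with hhdef
  have hh_lip : LipschitzWith (‖A‖₊ * (K * ‖v‖₊)) h := by
    have h1 : LipschitzWith (K * ‖v‖₊) (fun t => F (γ t)) := by
      apply LipschitzWith.of_dist_le_mul
      intro a b
      calc dist (F (γ a)) (F (γ b)) ≤ K * dist (γ a) (γ b) :=
            hF.dist_le_mul _ (hγO a) _ (hγO b)
        _ ≤ K * (‖v‖₊ * dist a b) := by
            gcongr
            exact hγ_lip.dist_le_mul a b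
        _ = ↑(K * ‖v‖₊) * dist a b := by push_cast; ring
    exact (A.lipschitz.comp h1: _)
  set M : ℝ := ‖B‖ * (K₁ : ℝ)^2 * ‖v‖^2 with hMdef
  have hM0 : 0 ≤ M := by positivity
  have key : ‖h 1 - h 0‖ ≤ M := by
    apply ftc_ae_bound hh_lip
    filter_upwards [hseg] with t ht hmem
    obtain ⟨hdiff, hcontact⟩ := ht hmem
    set z : Euc q := x + t • v with hzdef
    have hzO : z ∈ O := by
      rw [hzdef]
      exact hconv.add_smul_sub_mem hx hy ⟨hmem.1.le, hmem.2.le⟩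
    -- derivative of the unclamped curve
    have hc : HasDerivAt (fun u : ℝ => x + u • v) v t := by
      have := ((hasDerivAt_id t).smul_const v).const_add x
      simpa using this
    have hFc : HasDerivAt (fun u : ℝ => F (x + u • v)) (fderiv ℝ F z v) t :=
      (hdiff.hasFDerivAt.comp_hasDerivAt t hc)
    have hAc : HasDerivAt (fun u : ℝ => A (F (x + u • v))) (A (fderiv ℝ F z v)) t :=
      (A.hasFDerivAt.comp_hasDerivAt t hFc)
    have hev : h =ᶠ[𝓝 t] (fun u : ℝ => A (F (x + u • v))) := by
      filter_upwards [isOpen_Ioo.mem_nhds hmem] with u hu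
      rw [hhdef]
      simp only [hγdef, hproj_eq u hu]
    refine ⟨A (fderiv ℝ F z v), hAc.congr_of_eventuallyEq hev, ?_⟩
    -- bound the derivative
    set w : Euc m := (fderiv ℝ F z v).1 with hwdef
    have hd_eq : A (fderiv ℝ F z v) =
        (1/2 : ℝ) • (B ((F z).1 - (F x).1)) w := by
      simp only [hwdef]
      rw [hA_apply, hcontact v, map_sub]
      simp [ContinuousLinearMap.sub_apply, smul_sub]
    have hw_bound : ‖w‖ ≤ (K₁ : ℝ) * ‖v‖ := by
      have hfst : HasFDerivAt (fun u => (F u).1)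
          ((ContinuousLinearMap.fst ℝ (Euc m) (Euc s)).comp (fderiv ℝ F z)) z :=
        (ContinuousLinearMap.fst ℝ (Euc m) (Euc s)).hasFDerivAt.comp z hdiff.hasFDerivAt
      have h1 : ‖fderiv ℝ (fun u => (F u).1) z‖ ≤ (K₁ : ℝ) :=
        norm_fderiv_le_of_lipschitzOn ℝ (hO.mem_nhds hzO) hF1
      have h2 : w = fderiv ℝ (fun u => (F u).1) z v := by
        rw [hfst.fderiv]; rfl
      rw [h2]
      calc ‖fderiv ℝ (fun u => (F u).1) z v‖
          ≤ ‖fderiv ℝ (fun u => (F u).1) z‖ * ‖v‖ := ContinuousLinearMap.le_opNorm _ _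
        _ ≤ (K₁ : ℝ) * ‖v‖ := by gcongr
    have he_bound : ‖(F z).1 - (F x).1‖ ≤ (K₁ : ℝ) * ‖v‖ := by
      have := hF1.dist_le_mul z hzO x hx
      rw [dist_eq_norm, dist_eq_norm] at this
      calc ‖(F z).1 - (F x).1‖ ≤ (K₁ : ℝ) * ‖z - x‖ := this
        _ = (K₁ : ℝ) * (|t| * ‖v‖) := by
            rw [hzdef]; simp [norm_smul]
        _ ≤ (K₁ : ℝ) * (1 * ‖v‖) := by
            gcongr
            rw [abs_of_pos hmem.1]; exact hmem.2.le
        _ = (K₁ : ℝ) * ‖v‖ := by ring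
    rw [hd_eq]
    have : ‖(1/2 : ℝ) • (B ((F z).1 - (F x).1)) w‖
        ≤ (1/2) * (‖B‖ * ‖(F z).1 - (F x).1‖ * ‖w‖) := by
      rw [norm_smul]
      simp only [Real.norm_eq_abs]
      rw [abs_of_pos (by norm_num : (0:ℝ) < 1/2)]
      gcongr
      calc ‖(B ((F z).1 - (F x).1)) w‖ ≤ ‖B ((F z).1 - (F x).1)‖ * ‖w‖ :=
            ContinuousLinearMap.le_opNorm _ _
        _ ≤ ‖B‖ * ‖(F z).1 - (F x).1‖ * ‖w‖ := by
            gcongr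
            exact ContinuousLinearMap.le_opNorm _ _
    refine this.trans ?_
    rw [hMdef]
    have hBnn : (0:ℝ) ≤ ‖B‖ := ContinuousLinearMap.opNorm_nonneg B
    calc (1/2) * (‖B‖ * ‖(F z).1 - (F x).1‖ * ‖w‖)
        ≤ (1/2) * (‖B‖ * ((K₁:ℝ) * ‖v‖) * ((K₁:ℝ) * ‖v‖)) := by
          gcongr <;> positivity
      _ = (1/2) * (‖B‖ * (K₁ : ℝ)^2 * ‖v‖^2) := by ring
      _ ≤ ‖B‖ * (K₁ : ℝ)^2 * ‖v‖^2 := by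
          have hnn : (0:ℝ) ≤ ‖B‖ * (K₁ : ℝ)^2 * ‖v‖^2 := by positivity
          linarith
  -- identify endpoints
  have hp1 : proj 1 = 1 := by rw [hprojdef]; norm_num
  have hp0 : proj 0 = 0 := by rw [hprojdef]; norm_num
  have hγ1 : γ 1 = y := by
    show x + proj 1 • v = y
    rw [hp1, one_smul, hvdef, add_comm, sub_add_cancel]
  have hγ0 : γ 0 = x := by
    show x + proj 0 • v = x
    rw [hp0, zero_smul, add_zero]
  have hBuu : B (F x).1 ((F x).1) = 0 := by
    have h1 := hB (F x).1 (F x).1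
    have h2 : (2:ℝ) • B (F x).1 ((F x).1) = 0 := by
      rw [two_smul]; nth_rewrite 2 [h1]; simp
    simpa using (smul_eq_zero.mp h2).resolve_left (by norm_num)
  have hfinal : (F y).2 - (F x).2 - (1/2 : ℝ) • B (F x).1 ((F y).1) = h 1 - h 0 := by
    simp only [hhdef, hγ1, hγ0, hA_apply, hBuu, smul_zero]
    abel
  rw [hfinal]
  exact key

lemma segment_ae_null {q : ℕ} {N : Set (Euc q)} (hNm : MeasurableSet N)
    (hN0 : volume N = 0) :
    ∀ᵐ p : Euc q × Euc q ∂((volume : Measure (Euc q)).prod volume),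
      volume {t : ℝ | t ∈ Set.Ioo (0:ℝ) 1 ∧ p.1 + t • (p.2 - p.1) ∈ N} = 0 := by
  set T : Set ((Euc q × Euc q) × ℝ) :=
    {w | w.2 ∈ Set.Ioo (0:ℝ) 1 ∧ w.1.1 + w.2 • (w.1.2 - w.1.1) ∈ N} with hTdef
  have hG : Measurable (fun w : (Euc q × Euc q) × ℝ => w.1.1 + w.2 • (w.1.2 - w.1.1)) := by
    fun_prop
  have hTm : MeasurableSet T := by
    apply MeasurableSet.inter
    · exact measurable_snd measurableSet_Ioo
    · exact hG hNm
  have hT0 : (((volume : Measure (Euc q)).prod volume).prod (volume : Measure ℝ)) T = 0 := by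
    rw [Measure.prod_apply_symm hTm]
    have hzero : ∀ t : ℝ, ((volume : Measure (Euc q)).prod volume)
        ((fun p => (p, t)) ⁻¹' T) = 0 := by
      intro t
      by_cases ht : t ∈ Set.Ioo (0:ℝ) 1
      · have hslicem : MeasurableSet ((fun p : Euc q × Euc q => (p, t)) ⁻¹' T) :=
          hTm.preimage (measurable_id.prodMk measurable_const)
        rw [Measure.prod_apply hslicem]
        have hinner : ∀ a : Euc q,
            (volume : Measure (Euc q)) (Prod.mk a ⁻¹' ((fun p : Euc q × Euc q => (p, t)) ⁻¹' T)) = 0 := by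
          intro a
          have hset : Prod.mk a ⁻¹' ((fun p : Euc q × Euc q => (p, t)) ⁻¹' T)
              = (fun b : Euc q => t • b) ⁻¹' ((fun u : Euc q => (a - t • a) + u) ⁻¹' N) := by
            have hpt : ∀ b : Euc q, a + t • (b - a) = (a - t • a) + t • b := by
              intro b
              rw [smul_sub]
              abel
            ext b
            simp only [Set.mem_preimage, hTdef, Set.mem_setOf_eq]
            constructor
            · rintro ⟨-, hb⟩
              rwa [hpt b] at hb
            · intro hb
              exact ⟨ht, by rwa [hpt b]⟩
          rw [hset]
          have h1 : (volume : Measure (Euc q)) ((fun u : Euc q => (a - t • a) + u) ⁻¹' N) = 0 := by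
            rw [measure_preimage_add]
            exact hN0
          rw [Measure.addHaar_preimage_smul volume (ne_of_gt ht.1), h1, mul_zero]
        simp only [hinner]
        simp
      · have : ((fun p : Euc q × Euc q => (p, t)) ⁻¹' T) = ∅ := by
          ext p
          simp only [Set.mem_preimage, hTdef, Set.mem_setOf_eq, Set.mem_empty_iff_false]
          tauto
        rw [this]
        simp
    simp only [hzero]
    simp
  have := (Measure.measure_prod_null hTm).1 hT0
  filter_upwards [this] with p hp
  have hset : Prod.mk p ⁻¹' T = {t : ℝ | t ∈ Set.Ioo (0:ℝ) 1 ∧ p.1 + t • (p.2 - p.1) ∈ N} := rfl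
  rw [← hset]
  exact hp

/-- a Lipschitz map `F = (F₁,F₂)` on an open convex set satisfying the
contact equations `DF₂(x)v = ½ B(F₁(x), DF₁(x)v)` at a.e. differentiability point is
Lipschitz into the group, with constant `C · Lip(F₁)` where `C` depends only on `B`. -/
theorem stmt3 {q m s : ℕ} (hq : 1 ≤ q) (hm : 1 ≤ m) (hs : 1 ≤ s)
    (B : Euc m →L[ℝ] Euc m →L[ℝ] Euc s) (hB : ∀ u v, B u v = - B v u) :
    ∃ C : ℝ, 0 < C ∧
      ∀ (O : Set (Euc q)), IsOpen O → Convex ℝ O →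
      ∀ (F : Euc q → Euc m × Euc s) (K K₁ : NNReal),
        LipschitzOnWith K F O →
        LipschitzOnWith K₁ (fun x => (F x).1) O →
        (∀ᵐ x ∂ volume.restrict O, DifferentiableAt ℝ F x →
          ∀ v : Euc q, (fderiv ℝ F x v).2 =
            (1 / 2 : ℝ) • B (F x).1 ((fderiv ℝ F x v).1)) →
        ∀ x ∈ O, ∀ x' ∈ O,
          gaugeDist B (F x) (F x') ≤ C * K₁ * ‖x - x'‖ := by
  refine ⟨1 + Real.sqrt ‖B‖, by positivity, ?_⟩
  intro O hOopen hOconv F K K₁ hF hF1 hcontact x hx x' hx'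
  classical
  -- the set of good points
  set D : Set (Euc q) := {z | DifferentiableAt ℝ F z ∧
    ∀ v : Euc q, (fderiv ℝ F z v).2 =
      (1 / 2 : ℝ) • B (F z).1 ((fderiv ℝ F z v).1)} with hDdef
  have hae : ∀ᵐ z ∂ volume.restrict O, z ∈ D := by
    filter_upwards [ae_restrict_of_ae hF.ae_differentiableWithinAt_of_mem, hcontact,
      ae_restrict_mem hOopen.measurableSet] with z h1 h2 hzO
    have hdiff : DifferentiableAt ℝ F z :=
      (h1 hzO).differentiableAt (hOopen.mem_nhds hzO)
    exact ⟨hdiff, h2 hdiff⟩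
  have hnull : volume (O \ D) = 0 := by
    have h2 := ae_iff.mp hae
    rw [Measure.restrict_apply' hOopen.measurableSet] at h2
    refine measure_mono_null ?_ h2
    intro z hz
    exact ⟨hz.2, hz.1⟩
  set N : Set (Euc q) := toMeasurable volume (O \ D) with hNdef
  have hNm : MeasurableSet N := measurableSet_toMeasurable _ _
  have hN0 : volume N = 0 := by
    rw [hNdef, measure_toMeasurable]; exact hnull
  have hsubN : O \ D ⊆ N := subset_toMeasurable _ _
  -- the main quadratic estimate, first a.e., then everywhere by continuity
  have hMAIN : ∀ z ∈ O, ∀ z' ∈ O,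
      ‖(F z').2 - (F z).2 - (1 / 2 : ℝ) • B (F z).1 ((F z').1)‖
        ≤ ‖B‖ * (K₁ : ℝ)^2 * ‖z' - z‖^2 := by
    set μ2 : Measure (Euc q × Euc q) := (volume : Measure (Euc q)).prod volume with hμ2def
    have hFO : ContinuousOn F O := hF.continuousOn
    have hcf : ContinuousOn (fun p : Euc q × Euc q =>
        max (‖(F p.2).2 - (F p.1).2 - (1 / 2 : ℝ) • B (F p.1).1 ((F p.2).1)‖
          - ‖B‖ * (K₁ : ℝ)^2 * ‖p.2 - p.1‖^2) 0) (O ×ˢ O) := by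
      refine ContinuousOn.sup ?_ continuousOn_const
      refine ContinuousOn.sub ?_ ?_
      · apply ContinuousOn.norm
        have hc1 : ContinuousOn (fun p : Euc q × Euc q => F p.1) (O ×ˢ O) :=
          hFO.comp continuousOn_fst (fun p hp => hp.1)
        have hc2 : ContinuousOn (fun p : Euc q × Euc q => F p.2) (O ×ˢ O) :=
          hFO.comp continuousOn_snd (fun p hp => hp.2)
        have hBc : Continuous (fun uv : Euc m × Euc m => B uv.1 uv.2) :=
          B.continuous₂
        apply ContinuousOn.sub
        · exact (continuous_snd.comp_continuousOn hc2).sub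
            (continuous_snd.comp_continuousOn hc1)
        · refine ContinuousOn.const_smul (g := fun x : Euc q × Euc q => B (F x.1).1 (F x.2).1) ?_ (1 / 2 : ℝ)
          exact hBc.comp_continuousOn
            (((continuous_fst.comp_continuousOn hc1)).prodMk
              ((continuous_fst.comp_continuousOn hc2)))
      · fun_prop
    have hsegnull := segment_ae_null (q := q) hNm hN0
    have haef : (fun p : Euc q × Euc q =>
        max (‖(F p.2).2 - (F p.1).2 - (1 / 2 : ℝ) • B (F p.1).1 ((F p.2).1)‖
          - ‖B‖ * (K₁ : ℝ)^2 * ‖p.2 - p.1‖^2) 0)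
        =ᵐ[μ2.restrict (O ×ˢ O)] (fun _ => (0:ℝ)) := by
      filter_upwards [ae_restrict_of_ae hsegnull,
        ae_restrict_mem (hOopen.prod hOopen).measurableSet] with p hp hpO
      have hseg : ∀ᵐ t ∂(volume : Measure ℝ), t ∈ Set.Ioo (0:ℝ) 1 →
          (DifferentiableAt ℝ F (p.1 + t • (p.2 - p.1)) ∧
            ∀ v, (fderiv ℝ F (p.1 + t • (p.2 - p.1)) v).2 =
              (1/2 : ℝ) • B (F (p.1 + t • (p.2 - p.1))).1
                ((fderiv ℝ F (p.1 + t • (p.2 - p.1)) v).1)) := by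
        rw [ae_iff]
        refine measure_mono_null ?_ hp
        intro t ht
        simp only [Set.mem_setOf_eq, Classical.not_imp] at ht
        refine ⟨ht.1, ?_⟩
        by_contra hnN
        have hzO : p.1 + t • (p.2 - p.1) ∈ O :=
          hOconv.add_smul_sub_mem hpO.1 hpO.2 ⟨ht.1.1.le, ht.1.2.le⟩
        have hzD : p.1 + t • (p.2 - p.1) ∈ D := by
          by_contra hzD
          exact hnN (hsubN ⟨hzO, hzD⟩)
        exact ht.2 hzD
      have hineq := seg_bound B hB hOopen hOconv hF hF1 hpO.1 hpO.2 hseg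
      exact max_eq_right (sub_nonpos.mpr hineq)
    haveI : μ2.IsAddHaarMeasure := Measure.prod.instIsAddHaarMeasure _ _
    have hEqOn := Measure.eqOn_open_of_ae_eq haef (hOopen.prod hOopen) hcf continuousOn_const
    intro z hz z' hz'
    have h0 := hEqOn (Set.mk_mem_prod hz hz')
    simp only at h0
    rw [max_eq_right_iff] at h0
    linarith [h0]
  -- finish: combine the two estimates
  have hΔ := hMAIN x hx x' hx'
  have hterm1 : ‖(F x').1 - (F x).1‖ ≤ (K₁ : ℝ) * ‖x - x'‖ := by
    have := hF1.dist_le_mul x' hx' x hx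
    rw [dist_eq_norm, dist_eq_norm] at this
    rw [norm_sub_rev x x']
    exact this
  have hterm2 : Real.sqrt ‖(F x').2 - (F x).2 - (1 / 2 : ℝ) • B (F x).1 ((F x').1)‖
      ≤ Real.sqrt ‖B‖ * ((K₁ : ℝ) * ‖x - x'‖) := by
    have h1 : ‖(F x').2 - (F x).2 - (1 / 2 : ℝ) • B (F x).1 ((F x').1)‖
        ≤ ‖B‖ * ((K₁ : ℝ) * ‖x - x'‖)^2 := by
      refine hΔ.trans (le_of_eq ?_)
      rw [norm_sub_rev x' x]
      ring
    calc Real.sqrt ‖(F x').2 - (F x).2 - (1 / 2 : ℝ) • B (F x).1 ((F x').1)‖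
        ≤ Real.sqrt (‖B‖ * ((K₁ : ℝ) * ‖x - x'‖)^2) := Real.sqrt_le_sqrt h1
      _ = Real.sqrt ‖B‖ * ((K₁ : ℝ) * ‖x - x'‖) := by
          rw [Real.sqrt_mul (ContinuousLinearMap.opNorm_nonneg B),
            Real.sqrt_sq (by positivity)]
  rw [gaugeDist]
  have hfinal := add_le_add hterm1 hterm2
  refine hfinal.trans (le_of_eq ?_)
  ring
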